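/- Let A be a k-algebra with center Z a domain. Then κ(A[t]/Z[t]) = κ(A/Z) ⊗_k k[t], where for an algebra R with center S, κ(R/S) = {z ∈ S : z·τ(R/S) = 0} and τ(R/S) is the S-torsion ideal of R. -/

import Mathlib

/-- The set `τ(R/Z(R))` of `Z(R)`-torsion elements of `R`: elements annihilated by some nonzero
central element. -/
def tauSet (R : Type) [Ring R] : Set R :=
  {r | ∃ z : Subring.center R, z ≠ 0 ∧ (z : R) * r = 0}

/-- The annihilator `κ(R/Z(R))` of the torsion ideal: central elements annihilating
`τ(R/Z(R))`. -/
def kappaSet (R : Type) [Ring R] : Set R :=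
  {s | s ∈ Subring.center R ∧ ∀ r ∈ tauSet R, s * r = 0}

open Polynomial Finset in
lemma mem_center_poly {A : Type} [Ring A] (p : Polynomial A) :
    p ∈ Subring.center (Polynomial A) ↔ ∀ n, p.coeff n ∈ Subring.center A := by
  rw [Subring.mem_center_iff]
  constructor
  · intro h n
    rw [Subring.mem_center_iff]
    intro a
    have := congrArg (fun q => q.coeff n) (h (C a))
    simpa [coeff_C_mul, coeff_mul_C] using this
  · intro h q
    ext n
    rw [coeff_mul, coeff_mul]
    rw [← Finset.Nat.sum_antidiagonal_swap (f := fun x => p.coeff x.1 * q.coeff x.2)]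
    refine Finset.sum_congr rfl fun x _ => ?_
    simpa using (Subring.mem_center_iff.mp (h x.2)) (q.coeff x.1)

open Polynomial Finset in
lemma tau_coeff {A : Type} [Ring A] [IsDomain (Subring.center A)]
    {r : Polynomial A} (hr : r ∈ tauSet (Polynomial A)) (n : ℕ) :
    r.coeff n ∈ tauSet A := by
  obtain ⟨z, hz0, hzr⟩ := hr
  set zp : Polynomial A := (z : Polynomial A) with hzp
  have hzpne : zp ≠ 0 := fun h => hz0 (Subtype.ext h)
  set m : ℕ := zp.natDegree with hm
  set c : A := zp.coeff m with hcdef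
  have hc : c ∈ Subring.center A := (mem_center_poly zp).mp z.2 m
  have hcne : c ≠ 0 := Polynomial.leadingCoeff_ne_zero.mpr hzpne
  set N : ℕ := r.natDegree with hN
  have hzcoef : ∀ i, zp.coeff i ∈ Subring.center A := (mem_center_poly zp).mp z.2
  have key : ∀ d : ℕ, ∀ j : ℕ, N ≤ j + d → c ^ (d + 1) * r.coeff j = 0 := by
    intro d
    induction d with
    | zero =>
      intro j hj
      have h0 : (zp * r).coeff (m + j) = 0 := by rw [hzr, Polynomial.coeff_zero]
      rw [coeff_mul] at h0
      have hs : ∑ x ∈ antidiagonal (m + j), zp.coeff x.1 * r.coeff x.2 = c * r.coeff j := by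
        refine Finset.sum_eq_single (m, j) (fun x hx hne => ?_)
          (fun h => absurd (Finset.HasAntidiagonal.mem_antidiagonal.mpr (rfl : (m, j).1 + (m, j).2 = m + j)) h)
        rw [Finset.HasAntidiagonal.mem_antidiagonal] at hx
        rcases lt_trichotomy x.1 m with h1 | h1 | h1
        · have hb : N < x.2 := by omega
          rw [Polynomial.coeff_eq_zero_of_natDegree_lt hb, mul_zero]
        · exact absurd (Prod.ext h1 (by omega)) hne
        · rw [Polynomial.coeff_eq_zero_of_natDegree_lt h1, zero_mul]
      rw [pow_one]
      rw [hs] at h0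
      exact h0
    | succ d ih =>
      intro j hj
      by_cases hcase : N ≤ j + d
      · have hz := ih j hcase
        rw [pow_succ', mul_assoc, hz, mul_zero]
      · have h0 : (zp * r).coeff (m + j) = 0 := by rw [hzr, Polynomial.coeff_zero]
        rw [coeff_mul] at h0
        have h1 : c ^ (d + 1) * ∑ x ∈ antidiagonal (m + j), zp.coeff x.1 * r.coeff x.2 = 0 := by
          rw [h0, mul_zero]
        rw [Finset.mul_sum] at h1
        have hs : ∑ x ∈ antidiagonal (m + j), c ^ (d + 1) * (zp.coeff x.1 * r.coeff x.2)
            = c ^ (d + 1) * (c * r.coeff j) := by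
          refine Finset.sum_eq_single (m, j) (fun x hx hne => ?_)
            (fun h => absurd (Finset.HasAntidiagonal.mem_antidiagonal.mpr (rfl : (m, j).1 + (m, j).2 = m + j)) h)
          rw [Finset.HasAntidiagonal.mem_antidiagonal] at hx
          rcases lt_trichotomy x.1 m with h2 | h2 | h2
          · have hb : N ≤ x.2 + d := by omega
            have hz := ih x.2 hb
            have hcomm : zp.coeff x.1 * c ^ (d + 1) = c ^ (d + 1) * zp.coeff x.1 :=
              Subring.mem_center_iff.mp (pow_mem hc (d + 1)) (zp.coeff x.1)
            rw [← mul_assoc, ← hcomm, mul_assoc, hz, mul_zero]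
          · exact absurd (Prod.ext h2 (by omega)) hne
          · rw [Polynomial.coeff_eq_zero_of_natDegree_lt h2, zero_mul, mul_zero]
        rw [hs, ← mul_assoc, ← pow_succ] at h1
        exact h1
  refine ⟨⟨c, hc⟩ ^ (N + 1), pow_ne_zero _ (fun h => hcne (Subtype.ext_iff.mp h)), ?_⟩
  have := key N n (Nat.le_add_left N n)
  simpa using this

theorem stmt_10 (k : Type) [Field k] (A : Type) [Ring A] [Algebra k A]
    [IsDomain (Subring.center A)] :
    kappaSet (Polynomial A) = {p : Polynomial A | ∀ n : ℕ, p.coeff n ∈ kappaSet A} := by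
  ext p
  simp only [kappaSet, Set.mem_setOf_eq]
  constructor
  · rintro ⟨hpc, hp⟩ n
    refine ⟨(mem_center_poly p).mp hpc n, fun r hr => ?_⟩
    obtain ⟨z, hz0, hzr⟩ := hr
    have hCz : (Polynomial.C (z : A)) ∈ Subring.center (Polynomial A) := by
      rw [mem_center_poly]
      intro i
      rw [Polynomial.coeff_C]
      split_ifs
      · exact z.2
      · exact Subring.zero_mem _
    have hCzne : (⟨Polynomial.C (z : A), hCz⟩ : Subring.center (Polynomial A)) ≠ 0 := by
      intro hcon
      apply hz0
      apply Subtype.ext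
      have h2 := Subtype.ext_iff.mp hcon
      simp only at h2
      have : (z : A) = 0 := by
        simpa using Polynomial.C_eq_zero.mp (by simpa using h2)
      simpa using this
    have hτ : Polynomial.C r ∈ tauSet (Polynomial A) :=
      ⟨⟨Polynomial.C (z : A), hCz⟩, hCzne, by
        simp only
        rw [← Polynomial.C_mul, hzr, Polynomial.C_0]⟩
    have h3 := congrArg (fun q => q.coeff n) (hp _ hτ)
    simpa [Polynomial.coeff_mul_C] using h3
  · intro h
    refine ⟨(mem_center_poly p).mpr (fun n => (h n).1), fun r hr => ?_⟩
    ext n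
    rw [Polynomial.coeff_mul, Polynomial.coeff_zero]
    exact Finset.sum_eq_zero fun x hx => (h x.1).2 _ (tau_coeff hr x.2)
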